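/- Let A, B, C ∈ ℝ² be non-collinear and let P ∈ ℝ² lie strictly inside the wedge at C spanned by A and B, i.e. P = C + α·(A − C) + β·(B − C) with α > 0 and β > 0. Set a = ‖C − B‖, b = ‖C − A‖, D = (A − B)·(a/(a + b)) + B, and L = ‖D − C‖² − ((A − C) × (D − C))² / b². Then the quadratic equation L·t² + 2·((D − C) · (C − P))·t + ‖C − P‖² = 0 has two distinct real roots; equivalently, ((D − C) · (C − P))² − L·‖C − P‖² > 0. -/

import Mathlib

lemma pos_aux (a v0 v1 : ℝ) (ha2 : a ^ 2 = v0 ^ 2 + v1 ^ 2) (ha0 : 0 ≤ a)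
    (h : v0 ≠ 0 ∨ v1 ≠ 0) : 0 < a := by
  rcases ha0.lt_or_eq with hlt | heq
  · exact hlt
  · exfalso
    have h2 : v0 ^ 2 + v1 ^ 2 = 0 := by rw [← ha2, ← heq]; ring
    have hv0 : v0 = 0 := by nlinarith [sq_nonneg v0, sq_nonneg v1]
    have hv1 : v1 = 0 := by nlinarith [sq_nonneg v0, sq_nonneg v1]
    rcases h with h | h <;> exact h (by assumption)

lemma abq_aux (a b q c : ℝ) (ha : 0 < a) (hb : 0 < b)
    (hpyth : a ^ 2 * b ^ 2 = q ^ 2 + c ^ 2) (hc : c ≠ 0) :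
    0 < a * b - q ∧ 0 < a * b + q := by
  have hc2 : 0 < c ^ 2 := by positivity
  have hab : 0 < a * b := mul_pos ha hb
  constructor <;> nlinarith

lemma core (a b α β u0 u1 v0 v1 d0 d1 L M N : ℝ)
    (ha2 : a ^ 2 = v0 ^ 2 + v1 ^ 2) (hb2 : b ^ 2 = u0 ^ 2 + u1 ^ 2)
    (ha0 : 0 ≤ a) (hb0 : 0 ≤ b)
    (hcc : u0 * v1 - u1 * v0 ≠ 0) (hα : 0 < α) (hβ : 0 < β)
    (hd0 : d0 = a / (a + b) * (u0 - v0) + v0)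
    (hd1 : d1 = a / (a + b) * (u1 - v1) + v1)
    (hL : L = (d0 ^ 2 + d1 ^ 2) - (u0 * d1 - u1 * d0) ^ 2 / b ^ 2)
    (hM : M = d0 * (-(α * u0 + β * v0)) + d1 * (-(α * u1 + β * v1)))
    (hN : N = (α * u0 + β * v0) ^ 2 + (α * u1 + β * v1) ^ 2) :
    (∃ t₁ t₂ : ℝ, t₁ ≠ t₂ ∧ (L * t₁ ^ 2 + 2 * M * t₁ + N = 0) ∧
      (L * t₂ ^ 2 + 2 * M * t₂ + N = 0)) ∧
    M ^ 2 - L * N > 0 := by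
  have hapos : 0 < a := by
    apply pos_aux a v0 v1 ha2 ha0
    by_contra h
    push_neg at h
    exact hcc (by rw [h.1, h.2]; ring)
  have hbpos : 0 < b := by
    apply pos_aux b u0 u1 hb2 hb0
    by_contra h
    push_neg at h
    exact hcc (by rw [h.1, h.2]; ring)
  have hs : 0 < a + b := by linarith
  have hsne : a + b ≠ 0 := ne_of_gt hs
  have hbne : b ≠ 0 := ne_of_gt hbpos
  set q : ℝ := u0 * v0 + u1 * v1 with hqd
  obtain ⟨habq1, habq2⟩ := abq_aux a b q (u0 * v1 - u1 * v0) hapos hbpos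
    (by rw [ha2, hb2, hqd]; ring) hcc
  have hd0' : d0 = (a * u0 + b * v0) / (a + b) := by
    rw [hd0]; field_simp; ring
  have hd1' : d1 = (a * u1 + b * v1) / (a + b) := by
    rw [hd1]; field_simp; ring
  have hL2 : L = (a * b + q) ^ 2 / (a + b) ^ 2 := by
    rw [hL, hd0', hd1']
    rw [div_pow, div_pow]
    have hcr : (u0 * ((a * u1 + b * v1) / (a + b)) - u1 * ((a * u0 + b * v0) / (a + b))) ^ 2 / b ^ 2
        = (u0 * v1 - u1 * v0) ^ 2 / (a + b) ^ 2 := by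
      rw [show u0 * ((a * u1 + b * v1) / (a + b)) - u1 * ((a * u0 + b * v0) / (a + b))
          = b * (u0 * v1 - u1 * v0) / (a + b) by field_simp; ring]
      field_simp
    rw [hcr, ← add_div, ← sub_div]
    congr 1
    linear_combination (u0 ^ 2 + u1 ^ 2 - b ^ 2) * ha2
  have hM2 : M = -((a * β + b * α) * (a * b + q)) / (a + b) := by
    rw [hM, hd0', hd1']
    field_simp
    linear_combination (b * β) * ha2 + (a * α) * hb2
  have hN2 : N = α ^ 2 * b ^ 2 + 2 * α * β * q + β ^ 2 * a ^ 2 := by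
    rw [hN]
    linear_combination (-(α ^ 2)) * hb2 + (-(β ^ 2)) * ha2
  have heq : M ^ 2 - L * N = 2 * α * β * ((a * b + q) ^ 2 * (a * b - q)) / (a + b) ^ 2 := by
    rw [hM2, hN2, hL2]
    field_simp
    ring
  have hdisc : M ^ 2 - L * N > 0 := by
    rw [heq]
    apply div_pos
    · have := mul_pos (mul_pos hα hβ) (mul_pos (pow_pos habq2 2) habq1)
      linarith [this]
    · positivity
  refine ⟨?_, hdisc⟩
  have hLpos : 0 < L := by
    rw [hL2]
    exact div_pos (pow_pos habq2 2) (by positivity)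
  have hLne : L ≠ 0 := ne_of_gt hLpos
  set r : ℝ := Real.sqrt (M ^ 2 - L * N) with hrd
  have hr2 : r ^ 2 = M ^ 2 - L * N := Real.sq_sqrt (le_of_lt hdisc)
  have hrpos : 0 < r := Real.sqrt_pos.mpr hdisc
  refine ⟨(-M + r) / L, (-M - r) / L, ?_, ?_, ?_⟩
  · intro h
    rw [div_eq_div_iff hLne hLne] at h
    have hr0 : r * L = 0 := by linarith
    rcases mul_eq_zero.mp hr0 with h' | h'
    · linarith
    · exact hLne h'
  · field_simp
    linear_combination hr2
  · field_simp
    linear_combination hr2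

noncomputable section

/-- The plane ℝ². -/
abbrev Pt := EuclideanSpace ℝ (Fin 2)

/-- 2D cross product: u × v = u.1 * v.2 − u.2 * v.1. -/
def cross (u v : Pt) : ℝ := u 0 * v 1 - u 1 * v 0

lemma norm_sq_eq (x : Pt) : ‖x‖ ^ 2 = x 0 ^ 2 + x 1 ^ 2 := by
  rw [← real_inner_self_eq_norm_sq]
  simp only [PiLp.inner_apply, Fin.sum_univ_two, RCLike.inner_apply, conj_trivial]
  ring

lemma inner_eq (x y : Pt) : (inner ℝ x y : ℝ) = x 0 * y 0 + x 1 * y 1 := by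
  simp only [PiLp.inner_apply, Fin.sum_univ_two, RCLike.inner_apply, conj_trivial]
  ring

theorem stmt10 (A B C P : Pt) (hncol : cross (B - A) (C - A) ≠ 0)
    (α β : ℝ) (hα : 0 < α) (hβ : 0 < β)
    (hP : P = C + α • (A - C) + β • (B - C)) :
    let a : ℝ := ‖C - B‖
    let b : ℝ := ‖C - A‖
    let D : Pt := (a / (a + b)) • (A - B) + B
    let L : ℝ := ‖D - C‖ ^ 2 - (cross (A - C) (D - C)) ^ 2 / b ^ 2
    (∃ t₁ t₂ : ℝ, t₁ ≠ t₂ ∧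
      (L * t₁ ^ 2 + 2 * (inner ℝ (D - C) (C - P) : ℝ) * t₁ + ‖C - P‖ ^ 2 = 0) ∧
      (L * t₂ ^ 2 + 2 * (inner ℝ (D - C) (C - P) : ℝ) * t₂ + ‖C - P‖ ^ 2 = 0)) ∧
    (inner ℝ (D - C) (C - P) : ℝ) ^ 2 - L * ‖C - P‖ ^ 2 > 0 := by
  intro a b D L
  have ha : a = ‖C - B‖ := rfl
  have hb : b = ‖C - A‖ := rfl
  have hDdef : D = (a / (a + b)) • (A - B) + B := rfl
  have hLdef : L = ‖D - C‖ ^ 2 - (cross (A - C) (D - C)) ^ 2 / b ^ 2 := rfl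
  -- scalar abbreviations (literal)
  have ha2 : a ^ 2 = (B 0 - C 0) ^ 2 + (B 1 - C 1) ^ 2 := by
    rw [ha, norm_sq_eq]
    simp [PiLp.sub_apply]
    ring
  have hb2 : b ^ 2 = (A 0 - C 0) ^ 2 + (A 1 - C 1) ^ 2 := by
    rw [hb, norm_sq_eq]
    simp [PiLp.sub_apply]
    ring
  have hcc : (A 0 - C 0) * (B 1 - C 1) - (A 1 - C 1) * (B 0 - C 0) ≠ 0 := by
    intro h
    apply hncol
    have hcr : cross (B - A) (C - A)
        = (B 0 - A 0) * (C 1 - A 1) - (B 1 - A 1) * (C 0 - A 0) := rfl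
    rw [hcr]
    linear_combination h
  have hd0 : (D - C) 0 = a / (a + b) * ((A 0 - C 0) - (B 0 - C 0)) + (B 0 - C 0) := by
    rw [hDdef]
    simp [PiLp.sub_apply, PiLp.add_apply, PiLp.smul_apply, smul_eq_mul]
    ring
  have hd1 : (D - C) 1 = a / (a + b) * ((A 1 - C 1) - (B 1 - C 1)) + (B 1 - C 1) := by
    rw [hDdef]
    simp [PiLp.sub_apply, PiLp.add_apply, PiLp.smul_apply, smul_eq_mul]
    ring
  have he0 : (C - P) 0 = -(α * (A 0 - C 0) + β * (B 0 - C 0)) := by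
    rw [hP]
    simp [PiLp.sub_apply, PiLp.add_apply, PiLp.smul_apply, smul_eq_mul]
    ring
  have he1 : (C - P) 1 = -(α * (A 1 - C 1) + β * (B 1 - C 1)) := by
    rw [hP]
    simp [PiLp.sub_apply, PiLp.add_apply, PiLp.smul_apply, smul_eq_mul]
    ring
  have hLe : L = (((D - C) 0) ^ 2 + ((D - C) 1) ^ 2)
      - ((A 0 - C 0) * ((D - C) 1) - (A 1 - C 1) * ((D - C) 0)) ^ 2 / b ^ 2 := by
    rw [hLdef, norm_sq_eq]
    have hcr : cross (A - C) (D - C)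
        = (A 0 - C 0) * ((D - C) 1) - (A 1 - C 1) * ((D - C) 0) := rfl
    rw [hcr]
  have hMe : (inner ℝ (D - C) (C - P) : ℝ)
      = ((D - C) 0) * (-(α * (A 0 - C 0) + β * (B 0 - C 0)))
        + ((D - C) 1) * (-(α * (A 1 - C 1) + β * (B 1 - C 1))) := by
    rw [inner_eq, he0, he1]
  have hNe : ‖C - P‖ ^ 2 = (α * (A 0 - C 0) + β * (B 0 - C 0)) ^ 2
      + (α * (A 1 - C 1) + β * (B 1 - C 1)) ^ 2 := by
    rw [norm_sq_eq, he0, he1]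
    ring
  exact core a b α β (A 0 - C 0) (A 1 - C 1) (B 0 - C 0) (B 1 - C 1)
    ((D - C) 0) ((D - C) 1) L (inner ℝ (D - C) (C - P)) (‖C - P‖ ^ 2)
    ha2 hb2 (ha ▸ norm_nonneg _) (hb ▸ norm_nonneg _) hcc hα hβ hd0 hd1 hLe hMe hNe
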